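/- Let Φ be a crystallographic root system for a finite real reflection group W (i.e., 2⟨α,β⟩/⟨α,α⟩ ∈ ℤ for all α, β ∈ Φ) whose span has dimension at least 3, and fix a circuit C ⊆ Φ. If two m-dependences (C⃗, c⃗) and (C⃗′, c⃗′), each with pairwise distinct entries and with underlying set of entries equal to C, lie in the same Hurwitz orbit under the lifted Hurwitz moves, then wt(c⃗′) = wt(c⃗). -/

import Mathlib

open scoped RealInnerProductSpace

variable {V : Type*} [NormedAddCommGroup V] [InnerProductSpace ℝ V] [FiniteDimensional ℝ V]

/-- The orthogonal reflection in the hyperplane `α^⊥`. -/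
noncomputable def reflAlong (α : V) : V ≃ₗᵢ[ℝ] V :=
  Submodule.reflection ((Submodule.span ℝ {α})ᗮ)

/-- An orthogonal reflection: the reflection through the hyperplane orthogonal to some
nonzero vector. -/
def IsReflection (g : V ≃ₗᵢ[ℝ] V) : Prop :=
  ∃ α : V, α ≠ 0 ∧ g = reflAlong α

/-- A finite real reflection group: a finite subgroup of the orthogonal group generated by its
reflections and fixing no nonzero vector. -/
def IsReflectionGroup (W : Subgroup (V ≃ₗᵢ[ℝ] V)) : Prop :=
  (W : Set (V ≃ₗᵢ[ℝ] V)).Finite ∧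
    Subgroup.closure {g | g ∈ W ∧ IsReflection g} = W ∧
    ∀ v : V, (∀ g ∈ W, g v = v) → v = 0
/-- A root system for `W`: a finite `W`-stable set of nonzero vectors, containing exactly two
opposite normal vectors for each reflecting hyperplane of a reflection of `W`. -/
def IsRootSystem (W : Subgroup (V ≃ₗᵢ[ℝ] V)) (Φ : Set V) : Prop :=
  Φ.Finite ∧
    (∀ g ∈ W, ∀ α ∈ Φ, g α ∈ Φ) ∧
    (∀ α ∈ Φ, α ≠ 0 ∧ reflAlong α ∈ W) ∧
    (∀ α ∈ Φ, {x | x ∈ Φ ∧ ∃ r : ℝ, x = r • α} = {α, -α}) ∧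
    (∀ g ∈ W, IsReflection g → ∃ α ∈ Φ, g = reflAlong α)
/-- A circuit: a finite linearly dependent set of vectors, every proper subset of which is
linearly independent. -/
def IsCircuit {V' : Type*} [AddCommGroup V'] [Module ℝ V'] (C : Set V') : Prop :=
  C.Finite ∧ ¬ LinearIndependent ℝ (fun x : C => (x : V')) ∧
    ∀ D : Set V', D ⊂ C → LinearIndependent ℝ (fun x : D => (x : V'))

/-- The weight of a coefficient vector: the sum of absolute values of its entries. -/
noncomputable def wtFn {m : ℕ} (c : Fin m → ℝ) : ℝ := ∑ i, |c i|

/-- The lifted Hurwitz move on `m`-dependences: `σ_i` replaces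
`(α_i, α_{i+1})` by `(α_{i+1}, s_{α_{i+1}}(α_i))` and `(c_i, c_{i+1})` by
`(c_{i+1} + (2⟪α_i, α_{i+1}⟫/⟪α_{i+1}, α_{i+1}⟫)·c_i, c_i)`. -/
noncomputable def DepMove {m : ℕ} (p q : (Fin m → V) × (Fin m → ℝ)) : Prop :=
  ∃ (i : Fin m) (h : (i : ℕ) + 1 < m),
    q.1 i = p.1 ⟨(i : ℕ) + 1, h⟩ ∧
    q.1 ⟨(i : ℕ) + 1, h⟩ = reflAlong (p.1 ⟨(i : ℕ) + 1, h⟩) (p.1 i) ∧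
    q.2 i = p.2 ⟨(i : ℕ) + 1, h⟩ +
      2 * ⟪p.1 i, p.1 ⟨(i : ℕ) + 1, h⟩⟫ / ⟪p.1 ⟨(i : ℕ) + 1, h⟩, p.1 ⟨(i : ℕ) + 1, h⟩⟫ * p.2 i ∧
    q.2 ⟨(i : ℕ) + 1, h⟩ = p.2 i ∧
    ∀ j : Fin m, j ≠ i → j ≠ ⟨(i : ℕ) + 1, h⟩ → q.1 j = p.1 j ∧ q.2 j = p.2 j

/-- Two `m`-dependences lie in the same Hurwitz orbit when they are related by a finite
sequence of lifted Hurwitz moves and their inverses. -/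
noncomputable def SameDepOrbit {m : ℕ} (p q : (Fin m → V) × (Fin m → ℝ)) : Prop :=
  Relation.EqvGen DepMove p q

/-! ### Auxiliary lemmas -/

/-- If the integer-span of `{t * n j}` agrees with that of `{t' * n j}` for an integer vector
`n` with a nonzero entry, then `|t| = |t'|`. -/
theorem aux_lemG {m : ℕ} (n : Fin m → ℤ) (j0 : Fin m) (hn : n j0 ≠ 0) (t t' : ℝ)
    (h : AddSubgroup.closure (Set.range fun j => t * (n j : ℝ)) =
      AddSubgroup.closure (Set.range fun j => t' * (n j : ℝ))) : |t| = |t'| := by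
  obtain ⟨g, hg⟩ : ∃ g, Ideal.span (Set.range n) = Ideal.span {g} :=
    (IsPrincipalIdealRing.principal _).principal
  have hdvd : ∀ j, g ∣ n j := by
    intro j
    have h1 := Ideal.subset_span (Set.mem_range_self (f := n) j)
    rw [hg] at h1
    exact Ideal.mem_span_singleton.mp h1
  have hgmem : g ∈ Ideal.span (Set.range n) := by
    rw [hg]; exact Ideal.subset_span rfl
  obtain ⟨w, hw⟩ := (Submodule.mem_span_range_iff_exists_fun ℤ).mp hgmem
  have hg0 : g ≠ 0 := by
    rintro rfl; exact hn (zero_dvd_iff.mp (hdvd j0))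
  have hgR : (g : ℝ) ≠ 0 := Int.cast_ne_zero.mpr hg0
  have key : ∀ s : ℝ, AddSubgroup.closure (Set.range fun j => s * (n j : ℝ)) =
      AddSubgroup.zmultiples (s * (g : ℝ)) := by
    intro s
    apply le_antisymm
    · rw [AddSubgroup.closure_le]
      rintro x ⟨j, rfl⟩
      obtain ⟨e, he⟩ := hdvd j
      refine AddSubgroup.mem_zmultiples_iff.mpr ⟨e, ?_⟩
      show (e : ℤ) • (s * (g:ℝ)) = s * (n j : ℝ)
      rw [zsmul_eq_mul, he]; push_cast; ring
    · intro x hx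
      obtain ⟨k, rfl⟩ := AddSubgroup.mem_zmultiples_iff.mp hx
      refine AddSubgroup.zsmul_mem _ ?_ k
      have hsum : s * (g:ℝ) = ∑ j, (w j : ℝ) * (s * (n j : ℝ)) := by
        rw [← hw]; push_cast; rw [Finset.mul_sum]
        exact Finset.sum_congr rfl fun j _ => by rw [zsmul_eq_mul]; push_cast; ring
      rw [hsum]
      refine AddSubgroup.sum_mem _ fun j _ => ?_
      rw [← zsmul_eq_mul]
      exact AddSubgroup.zsmul_mem _ (AddSubgroup.subset_closure (Set.mem_range_self j)) _
  rw [key t, key t'] at h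
  have h1 : t * (g:ℝ) ∈ AddSubgroup.zmultiples (t' * (g:ℝ)) := by
    rw [← h]; exact AddSubgroup.mem_zmultiples _
  have h2 : t' * (g:ℝ) ∈ AddSubgroup.zmultiples (t * (g:ℝ)) := by
    rw [h]; exact AddSubgroup.mem_zmultiples _
  obtain ⟨a, ha⟩ := AddSubgroup.mem_zmultiples_iff.mp h1
  obtain ⟨b, hb⟩ := AddSubgroup.mem_zmultiples_iff.mp h2
  rw [zsmul_eq_mul] at ha hb
  rcases eq_or_ne t 0 with rfl | ht
  · have h0 : t' * (g:ℝ) = 0 := by rw [← hb]; ring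
    have ht' : t' = 0 := by
      rcases mul_eq_zero.mp h0 with h' | h'
      · exact h'
      · exact absurd h' hgR
    rw [ht']
  · have htg : t * (g:ℝ) ≠ 0 := mul_ne_zero ht hgR
    have hab : (a:ℝ) * b = 1 := by
      have h3 : ((a:ℝ) * b) * (t * g) = 1 * (t * g) := by
        rw [one_mul, mul_assoc, hb, ha]
      exact mul_right_cancel₀ htg h3
    have habZ : a * b = 1 := by exact_mod_cast hab
    rcases Int.mul_eq_one_iff_eq_one_or_neg_one.mp habZ with ⟨_, hb1⟩ | ⟨_, hb1⟩
    · subst hb1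
      have heq : t = t' := by
        have h4 : t * (g:ℝ) = t' * g := by rw [← hb]; push_cast; ring
        exact mul_right_cancel₀ hgR h4
      rw [heq]
    · subst hb1
      have heq : t' = -t := by
        have h4 : t' * (g:ℝ) = (-t) * g := by rw [← hb]; push_cast; ring
        exact mul_right_cancel₀ hgR h4
      rw [heq, abs_neg]

/-- A single lifted Hurwitz move preserves membership of all entries in `Φ` (both ways) and,
when the entries lie in the crystallographic root system `Φ`, it preserves the subgroup of `ℝ`
generated by the coefficients. -/
theorem aux_moveInv {W : Subgroup (V ≃ₗᵢ[ℝ] V)} {Φ : Set V} (hΦ : IsRootSystem W Φ)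
    (hcrys : ∀ β ∈ Φ, ∀ γ ∈ Φ, ∃ z : ℤ, 2 * ⟪β, γ⟫ / ⟪β, β⟫ = (z : ℝ))
    {m : ℕ} {p q : (Fin m → V) × (Fin m → ℝ)} (hpq : DepMove p q) :
    ((∀ j, p.1 j ∈ Φ) ↔ (∀ j, q.1 j ∈ Φ)) ∧
      ((∀ j, p.1 j ∈ Φ) →
        AddSubgroup.closure (Set.range p.2) = AddSubgroup.closure (Set.range q.2)) := by
  obtain ⟨i, h, hq1i, hq1s, hq2i, hq2s, hrest⟩ := hpq
  set i1 : Fin m := ⟨(i : ℕ) + 1, h⟩ with hi1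
  have hGfwd : (∀ j, p.1 j ∈ Φ) → ∀ j, q.1 j ∈ Φ := by
    intro hp j
    by_cases hji : j = i
    · rw [hji, hq1i]; exact hp i1
    by_cases hji1 : j = i1
    · rw [hji1, hq1s]
      exact hΦ.2.1 _ ((hΦ.2.2.1 _ (hp i1)).2) _ (hp i)
    · rw [(hrest j hji hji1).1]; exact hp j
  have hGbwd : (∀ j, q.1 j ∈ Φ) → ∀ j, p.1 j ∈ Φ := by
    intro hq j
    by_cases hji1 : j = i1
    · rw [hji1, ← hq1i]; exact hq i
    by_cases hji : j = i
    · have hback : p.1 i = reflAlong (q.1 i) (q.1 i1) := by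
        rw [hq1i, hq1s]
        exact (Submodule.reflection_involutive _ (p.1 i)).symm
      rw [hji, hback]
      exact hΦ.2.1 _ ((hΦ.2.2.1 _ (hq i)).2) _ (hq i1)
    · rw [← (hrest j hji hji1).1]; exact hq j
  refine ⟨⟨hGfwd, hGbwd⟩, ?_⟩
  intro hp
  obtain ⟨z, hz⟩ := hcrys (p.1 i1) (hp i1) (p.1 i) (hp i)
  have hz' : 2 * ⟪p.1 i, p.1 i1⟫ / ⟪p.1 i1, p.1 i1⟫ = (z : ℝ) := by
    rw [real_inner_comm]; exact hz
  have hq2i' : q.2 i = p.2 i1 + (z : ℝ) * p.2 i := by rw [hq2i, hz']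
  apply le_antisymm
  · rw [AddSubgroup.closure_le]
    rintro x ⟨j, rfl⟩
    by_cases hji : j = i
    · rw [hji, ← hq2s]
      exact AddSubgroup.subset_closure (Set.mem_range_self i1)
    by_cases hji1 : j = i1
    · have h1 : p.2 i1 = q.2 i - (z : ℝ) * q.2 i1 := by
        rw [hq2i', hq2s]; ring
      rw [hji1, h1]
      refine AddSubgroup.sub_mem _ (AddSubgroup.subset_closure (Set.mem_range_self i)) ?_
      rw [← zsmul_eq_mul]
      exact AddSubgroup.zsmul_mem _ (AddSubgroup.subset_closure (Set.mem_range_self i1)) _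
    · rw [← (hrest j hji hji1).2]
      exact AddSubgroup.subset_closure (Set.mem_range_self j)
  · rw [AddSubgroup.closure_le]
    rintro x ⟨j, rfl⟩
    by_cases hji : j = i
    · rw [hji, hq2i']
      refine AddSubgroup.add_mem _ (AddSubgroup.subset_closure (Set.mem_range_self i1)) ?_
      rw [← zsmul_eq_mul]
      exact AddSubgroup.zsmul_mem _ (AddSubgroup.subset_closure (Set.mem_range_self i)) _
    by_cases hji1 : j = i1
    · rw [hji1, hq2s]
      exact AddSubgroup.subset_closure (Set.mem_range_self i)
    · rw [(hrest j hji hji1).2]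
      exact AddSubgroup.subset_closure (Set.mem_range_self j)

/-- The Hurwitz orbit invariant: the subgroup of `ℝ` generated by the coefficients. -/
theorem aux_orbitInv {W : Subgroup (V ≃ₗᵢ[ℝ] V)} {Φ : Set V} (hΦ : IsRootSystem W Φ)
    (hcrys : ∀ β ∈ Φ, ∀ γ ∈ Φ, ∃ z : ℤ, 2 * ⟪β, γ⟫ / ⟪β, β⟫ = (z : ℝ))
    {m : ℕ} {p q : (Fin m → V) × (Fin m → ℝ)} (hpq : Relation.EqvGen DepMove p q) :
    ((∀ j, p.1 j ∈ Φ) ↔ (∀ j, q.1 j ∈ Φ)) ∧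
      ((∀ j, p.1 j ∈ Φ) →
        AddSubgroup.closure (Set.range p.2) = AddSubgroup.closure (Set.range q.2)) := by
  induction hpq with
  | rel x y hxy => exact aux_moveInv hΦ hcrys hxy
  | refl x => exact ⟨Iff.rfl, fun _ => rfl⟩
  | symm x y hxy ih => exact ⟨ih.1.symm, fun hy => (ih.2 (ih.1.mpr hy)).symm⟩
  | trans x y z hxy hyz ih1 ih2 =>
      exact ⟨ih1.1.trans ih2.1, fun hx => (ih1.2 hx).trans (ih2.2 (ih1.1.mp hx))⟩

/-- A dependence on a circuit with one vanishing coordinate vanishes. -/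
theorem aux_circuit_dep_zero {C : Set V} (hcirc : IsCircuit C) {m : ℕ} {β : Fin m → V}
    (hinj : Function.Injective β) (hrange : Set.range β = C)
    {x : Fin m → ℝ} (hx : ∑ j, x j • β j = 0) {j0 : Fin m} (hxj0 : x j0 = 0) :
    x = 0 := by
  classical
  set D : Set V := C \ {β j0} with hD
  have hmem : ∀ j, β j ∈ C := fun j => hrange ▸ Set.mem_range_self j
  have hDsub : D ⊂ C := by
    constructor
    · exact Set.diff_subset
    · intro hsub
      have h1 := hsub (hmem j0)
      rw [hD] at h1
      exact h1.2 rfl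
  have hLI := hcirc.2.2 D hDsub
  have einj : Function.Injective
      (fun j : {j : Fin m // j ≠ j0} =>
        (⟨β j, ⟨hmem j, fun hc => j.2 (hinj hc)⟩⟩ : D)) := by
    intro a b hab
    have h1 : β (a : Fin m) = β (b : Fin m) := congrArg Subtype.val hab
    exact Subtype.ext (hinj h1)
  have hLI2 : LinearIndependent ℝ (fun j : {j : Fin m // j ≠ j0} => β j) :=
    hLI.comp _ einj
  have hsum : ∑ j : {j : Fin m // j ≠ j0}, x j • β j = 0 := by
    have h1 : ∑ j : {j : Fin m // j ≠ j0}, x j • β j =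
        ∑ j ∈ Finset.univ.erase j0, x j • β j :=
      (Finset.sum_subtype (p := fun j => j ≠ j0) _
        (fun j => by simp [Finset.mem_erase]) (fun j => x j • β j)).symm
    rw [h1, Finset.sum_erase _ (by rw [hxj0]; exact zero_smul ℝ (β j0))]
    exact hx
  have hall := Fintype.linearIndependent_iff.mp hLI2 (fun j => x j) hsum
  funext j
  by_cases hj : j = j0
  · rw [hj]; exact hxj0
  · exact hall ⟨j, hj⟩

/-- In a crystallographic situation a nonzero real dependence among a tuple of roots can be
replaced by a nonzero integral dependence. -/
theorem aux_exists_int_kernel {m : ℕ} (β : Fin m → V)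
    (hβ0 : ∀ j, β j ≠ 0)
    (hcrysβ : ∀ j l, ∃ z : ℤ, 2 * ⟪β j, β l⟫ / ⟪β j, β j⟫ = (z : ℝ))
    (y : Fin m → ℝ) (hy0 : y ≠ 0) (hy : ∑ j, y j • β j = 0) :
    ∃ n : Fin m → ℤ, (∃ j, n j ≠ 0) ∧ ∑ j, (n j : ℝ) • β j = 0 := by
  classical
  choose z hz using hcrysβ
  set Nq : Matrix (Fin m) (Fin m) ℚ := Matrix.of (fun j l => (z j l : ℚ)) with hNq
  set Nr : Matrix (Fin m) (Fin m) ℝ := Nq.map (Rat.cast) with hNr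
  have hNrjl : ∀ j l, Nr j l = (z j l : ℝ) := by
    intro j l; simp [hNr, hNq]
  have hNry : Nr.mulVec y = 0 := by
    funext j
    show ∑ l, Nr j l * y l = 0
    have hA : ⟪β j, β j⟫ ≠ 0 := inner_self_ne_zero.mpr (hβ0 j)
    have hinner : ⟪β j, (0 : V)⟫ = 0 := inner_zero_right _
    calc ∑ l, Nr j l * y l
        = ∑ l, (2 / ⟪β j, β j⟫) * (y l * ⟪β j, β l⟫) := by
          refine Finset.sum_congr rfl fun l _ => ?_
          rw [hNrjl, ← hz]; field_simp
      _ = (2 / ⟪β j, β j⟫) * ⟪β j, ∑ l, y l • β l⟫ := by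
          rw [inner_sum, Finset.mul_sum]
          refine Finset.sum_congr rfl fun l _ => ?_
          rw [real_inner_smul_right]
      _ = 0 := by rw [hy, hinner, mul_zero]
  have hdetR : Nr.det = 0 := Matrix.exists_mulVec_eq_zero_iff.mp ⟨y, hy0, hNry⟩
  have hdetQ : Nq.det = 0 := by
    have h2 : ((Nq.det : ℚ) : ℝ) = (Nq.map (Rat.cast)).det := by
      have h3 := RingHom.map_det (Rat.castHom ℝ) Nq
      simpa [RingHom.mapMatrix_apply] using h3
    rw [← hNr, hdetR] at h2
    exact_mod_cast h2
  obtain ⟨v, hv0, hvker⟩ := Matrix.exists_mulVec_eq_zero_iff.mpr hdetQ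
  set d : ℤ := ∏ j, ((v j).den : ℤ) with hd
  have hd0 : d ≠ 0 := by
    rw [hd]
    exact Finset.prod_ne_zero_iff.mpr fun j _ => Int.natCast_ne_zero.mpr (v j).den_ne_zero
  have hmul : ∀ j, ∃ nj : ℤ, v j * (d : ℚ) = (nj : ℚ) := by
    intro j
    obtain ⟨e, he⟩ : ((v j).den : ℤ) ∣ d :=
      Finset.dvd_prod_of_mem (fun j => ((v j).den : ℤ)) (Finset.mem_univ j)
    refine ⟨(v j).num * e, ?_⟩
    have hqden : v j * ((v j).den : ℚ) = (v j).num := by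
      nth_rewrite 1 [← Rat.num_div_den (v j)]
      rw [div_mul_cancel₀]
      exact_mod_cast (v j).den_ne_zero
    rw [he]
    push_cast
    rw [← mul_assoc, hqden]
  choose n hn using hmul
  refine ⟨n, ?_, ?_⟩
  · have hex : ∃ j, v j ≠ 0 := by
      by_contra hcon
      push_neg at hcon
      exact hv0 (funext hcon)
    obtain ⟨j, hj⟩ := hex
    refine ⟨j, fun hcon => hj ?_⟩
    have h1 := hn j
    rw [hcon] at h1
    push_cast at h1
    rcases mul_eq_zero.mp h1 with h' | h'
    · exact h'
    · exact absurd h' (by exact_mod_cast hd0)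
  · have hrow : ∀ j, ∑ l, (z j l : ℝ) * (n l : ℝ) = 0 := by
      intro j
      have hq : ∑ l, (z j l : ℚ) * (n l : ℚ) = 0 := by
        have hrowq : ∑ l, (z j l : ℚ) * v l = 0 := congrFun hvker j
        calc ∑ l, (z j l : ℚ) * (n l : ℚ)
            = ∑ l, ((z j l : ℚ) * v l) * (d:ℚ) := by
              refine Finset.sum_congr rfl fun l _ => ?_
              rw [← hn l]; ring
          _ = (∑ l, (z j l : ℚ) * v l) * (d:ℚ) := by rw [Finset.sum_mul]
          _ = 0 := by rw [hrowq, zero_mul]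
      have h1 := congrArg (Rat.cast : ℚ → ℝ) hq
      push_cast at h1
      convert h1 using 2
    have hperp : ∀ j, ⟪β j, ∑ l, (n l : ℝ) • β l⟫ = 0 := by
      intro j
      have hA : ⟪β j, β j⟫ ≠ 0 := inner_self_ne_zero.mpr (hβ0 j)
      have h1 : ⟪β j, ∑ l, (n l : ℝ) • β l⟫ = ∑ l, (n l : ℝ) * ⟪β j, β l⟫ := by
        rw [inner_sum]
        exact Finset.sum_congr rfl fun l _ => real_inner_smul_right _ _ _
      have h2 : ∑ l, (n l : ℝ) * ⟪β j, β l⟫ =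
          (⟪β j, β j⟫ / 2) * ∑ l, (z j l : ℝ) * (n l : ℝ) := by
        rw [Finset.mul_sum]
        refine Finset.sum_congr rfl fun l _ => ?_
        rw [← hz]
        field_simp
      rw [h1, h2, hrow j, mul_zero]
    have hss : ⟪∑ j, (n j : ℝ) • β j, ∑ l, (n l : ℝ) • β l⟫ = (0:ℝ) := by
      rw [sum_inner]
      refine Finset.sum_eq_zero fun j _ => ?_
      rw [real_inner_smul_left, hperp j, mul_zero]
    exact inner_self_eq_zero.mp hss

/-- In a crystallographic root system of rank at least `3`, two `m`-dependences supported on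
the same fixed circuit and lying in the same Hurwitz orbit have equal weight. -/
theorem stmt12 (W : Subgroup (V ≃ₗᵢ[ℝ] V)) (hW : IsReflectionGroup W)
    (Φ : Set V) (hΦ : IsRootSystem W Φ)
    (hcrys : ∀ β ∈ Φ, ∀ γ ∈ Φ, ∃ z : ℤ, 2 * ⟪β, γ⟫ / ⟪β, β⟫ = (z : ℝ))
    (hrank : 3 ≤ Module.finrank ℝ (Submodule.span ℝ Φ))
    (C : Set V) (hC : C ⊆ Φ) (hcirc : IsCircuit C)
    (m : ℕ) (α α' : Fin m → V) (c c' : Fin m → ℝ)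
    (hinj : Function.Injective α) (hinj' : Function.Injective α')
    (hrange : Set.range α = C) (hrange' : Set.range α' = C)
    (hdep : ∑ j, c j • α j = 0) (hdep' : ∑ j, c' j • α' j = 0)
    (horb : SameDepOrbit (α, c) (α', c')) :
    wtFn c' = wtFn c := by
  classical
  have hmemC : ∀ j, α j ∈ C := fun j => hrange ▸ Set.mem_range_self j
  have hmemC' : ∀ j, α' j ∈ C := fun j => hrange' ▸ Set.mem_range_self j
  have hGood : ∀ j, α j ∈ Φ := fun j => hC (hmemC j)
  -- a nonzero real dependence coming from the circuit
  haveI : Fintype C := hcirc.1.fintype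
  have hfbij : Function.Bijective (fun j => (⟨α j, hmemC j⟩ : C)) := by
    constructor
    · intro a b hab; exact hinj (congrArg Subtype.val hab)
    · rintro ⟨x, hx⟩
      rw [← hrange] at hx
      obtain ⟨j, hj⟩ := hx
      exact ⟨j, Subtype.ext hj⟩
  let e : Fin m ≃ C := Equiv.ofBijective _ hfbij
  obtain ⟨g, hgsum, i0, hgi0⟩ := Fintype.not_linearIndependent_iff.mp hcirc.2.1
  have hy : ∑ j, g (e j) • α j = 0 := by
    have h1 := Equiv.sum_comp e (fun x : C => g x • (x : V))
    rw [← h1] at hgsum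
    exact hgsum
  have hy0 : (fun j => g (e j)) ≠ 0 := by
    intro hcon
    apply hgi0
    have h1 := congrFun hcon (e.symm i0)
    simpa using h1
  -- an integral dependence
  obtain ⟨n, ⟨j1, hj1⟩, hker⟩ := aux_exists_int_kernel α
    (fun j => (hΦ.2.2.1 _ (hGood j)).1)
    (fun j l => hcrys (α j) (hGood j) (α l) (hGood l)) _ hy0 hy
  set u : Fin m → ℝ := fun j => (n j : ℝ) with hu
  have hu1 : u j1 ≠ 0 := Int.cast_ne_zero.mpr hj1
  -- c is proportional to u
  set t : ℝ := c j1 / u j1 with hT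
  have hct : ∀ j, c j = t * u j := by
    have hsum : ∑ j, (c j - t * u j) • α j = 0 := by
      have h1 : ∀ j, (c j - t * u j) • α j = c j • α j - t • (u j • α j) := by
        intro j; rw [sub_smul, smul_smul]
      simp_rw [h1]
      rw [Finset.sum_sub_distrib, hdep, ← Finset.smul_sum, hker, smul_zero, sub_zero]
    have hzero : (fun j => c j - t * u j) = 0 :=
      aux_circuit_dep_zero hcirc hinj hrange hsum (j0 := j1)
        (by rw [hT, div_mul_cancel₀ _ hu1, sub_self])
    intro j
    have h2 := congrFun hzero j
    simpa [sub_eq_zero] using h2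
  -- the permutation matching α' with α
  have hπex : ∀ j, ∃ l, α l = α' j := by
    intro j
    have h1 := hmemC' j
    rw [← hrange] at h1
    exact h1
  choose π hπ using hπex
  have hπinj : Function.Injective π := by
    intro a b hab
    apply hinj'
    rw [← hπ a, ← hπ b, hab]
  have hπbij : Function.Bijective π := Finite.injective_iff_bijective.mp hπinj
  let ep : Fin m ≃ Fin m := Equiv.ofBijective π hπbij
  -- c' is proportional to u ∘ π
  have hker' : ∑ j, u (π j) • α' j = 0 := by
    have h1 : ∀ j, u (π j) • α' j = u (π j) • α (π j) := by
      intro j; rw [hπ j]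
    simp_rw [h1]
    have h2 : ∑ i, u (π i) • α (π i) = ∑ i, u i • α i :=
      Equiv.sum_comp ep (fun l => u l • α l)
    rw [h2]
    exact hker
  have hπj1 : π (ep.symm j1) = j1 := ep.apply_symm_apply j1
  have hu1' : u (π (ep.symm j1)) ≠ 0 := by rw [hπj1]; exact hu1
  set t' : ℝ := c' (ep.symm j1) / u (π (ep.symm j1)) with hT'
  have hct' : ∀ j, c' j = t' * u (π j) := by
    have hsum : ∑ j, (c' j - t' * u (π j)) • α' j = 0 := by
      have h1 : ∀ j, (c' j - t' * u (π j)) • α' j = c' j • α' j - t' • (u (π j) • α' j) := by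
        intro j; rw [sub_smul, smul_smul]
      simp_rw [h1]
      rw [Finset.sum_sub_distrib, hdep', ← Finset.smul_sum, hker', smul_zero, sub_zero]
    have hzero : (fun j => c' j - t' * u (π j)) = 0 :=
      aux_circuit_dep_zero hcirc hinj' hrange' hsum (j0 := ep.symm j1)
        (by rw [hT', div_mul_cancel₀ _ hu1', sub_self])
    intro j
    have h2 := congrFun hzero j
    simpa [sub_eq_zero] using h2
  -- the orbit invariant
  have horb' : Relation.EqvGen DepMove (α, c) (α', c') := horb
  have hcl : AddSubgroup.closure (Set.range c) = AddSubgroup.closure (Set.range c') :=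
    (aux_orbitInv hΦ hcrys horb').2 hGood
  have hceq : c = fun j => t * (n j : ℝ) := funext hct
  have hceq' : c' = (fun l => t' * (n l : ℝ)) ∘ π := funext hct'
  have hrange'' : Set.range c' = Set.range (fun l => t' * (n l : ℝ)) := by
    rw [hceq']
    exact Set.range_comp _ π ▸ (hπbij.2.range_comp _)
  rw [hceq, hrange''] at hcl
  have habs : |t| = |t'| := aux_lemG n j1 hj1 t t' hcl
  -- conclude
  have h1 : wtFn c' = |t'| * ∑ l, |u l| := by
    show (∑ j, |c' j|) = _
    have h2 : ∀ j, |c' j| = |t'| * |u (π j)| := by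
      intro j; rw [hct' j, abs_mul]
    simp_rw [h2]
    rw [← Finset.mul_sum]
    have h5 : ∑ i, |u (π i)| = ∑ l, |u l| := Equiv.sum_comp ep (fun l => |u l|)
    rw [h5]
  have h3 : wtFn c = |t| * ∑ l, |u l| := by
    show (∑ j, |c j|) = _
    have h4 : ∀ j, |c j| = |t| * |u j| := by
      intro j; rw [hct j, abs_mul]
    simp_rw [h4]
    rw [← Finset.mul_sum]
  rw [h1, h3, habs]
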